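/- For every prime p and every integer n ≥ 0, the polynomial congruence B_{p+n}(x) ≡ x^p B_n(x) + B_{n+1}(x) (mod p) holds, i.e., all coefficients of B_{p+n}(x) − x^p B_n(x) − B_{n+1}(x) are divisible by p. -/

import Mathlib

open Polynomial Finset

/-- Stirling numbers of the second kind. -/
def stirling2 : ℕ → ℕ → ℕ
  | 0, 0 => 1
  | 0, _ + 1 => 0
  | _ + 1, 0 => 0
  | n + 1, k + 1 => (k + 1) * stirling2 n (k + 1) + stirling2 n k

/-- Signed Stirling numbers of the first kind. -/
def stirling1 : ℕ → ℕ → ℤ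
  | 0, 0 => 1
  | 0, _ + 1 => 0
  | n + 1, 0 => -(n : ℤ) * stirling1 n 0
  | n + 1, k + 1 => stirling1 n k - (n : ℤ) * stirling1 n (k + 1)

/-- The Bell polynomial `B_m(x) = ∑_{j=0}^m S(m,j) x^j` over `ℤ`. -/
noncomputable def bellPoly (m : ℕ) : Polynomial ℤ :=
  ∑ j ∈ range (m + 1), (stirling2 m j : ℤ) • X ^ j

/-- The derangement polynomial `D_m(x) = ∑_{j=0}^m C(m,j) j! (x-1)^{m-j}` over `ℤ`. -/
noncomputable def derPoly (m : ℕ) : Polynomial ℤ :=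
  ∑ j ∈ range (m + 1), ((m.choose j * j.factorial : ℕ) : ℤ) • (X - 1) ^ (m - j)

/-- The Bell numbers `B_m = ∑_j S(m,j)`. -/
def bell (m : ℕ) : ℕ := ∑ j ∈ range (m + 1), stirling2 m j

/-! ### Auxiliary lemmas -/

lemma stirling2_eq_zero : ∀ {m k : ℕ}, m < k → stirling2 m k = 0
  | 0, k+1, _ => rfl
  | m+1, k+1, h => by
    rw [stirling2, stirling2_eq_zero (by omega), stirling2_eq_zero (by omega)]
    ring

lemma stirling2_self : ∀ n, stirling2 n n = 1
  | 0 => rfl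
  | n + 1 => by
    rw [stirling2, stirling2_self n, stirling2_eq_zero (by omega)]; ring

lemma bellPoly_succ (m : ℕ) :
    bellPoly (m + 1) = X * (bellPoly m + derivative (bellPoly m)) := by
  have hd : derivative (bellPoly m)
      = ∑ j ∈ range (m + 1), ((j * stirling2 m j : ℕ) : ℤ) • X ^ (j - 1) := by
    rw [bellPoly, derivative_sum]
    refine Finset.sum_congr rfl fun j _ => ?_
    rw [derivative_smul, derivative_X_pow, smul_eq_C_mul, smul_eq_C_mul]
    push_cast
    rw [C_mul]
    ring
  rw [bellPoly, hd, bellPoly, mul_add, Finset.mul_sum, Finset.mul_sum]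
  have e1 : ∀ j ∈ range (m+1), X * ((stirling2 m j : ℤ) • (X : Polynomial ℤ) ^ j)
      = ((stirling2 m j : ℕ) : ℤ) • X ^ (j+1) := fun j _ => by
    rw [mul_smul_comm, ← pow_succ']
  have e2 : ∀ j ∈ range (m+1), X * (((j * stirling2 m j : ℕ) : ℤ) • (X : Polynomial ℤ) ^ (j-1))
      = (((j * stirling2 m j : ℕ)) : ℤ) • X ^ j := by
    intro j _
    cases j with
    | zero => simp
    | succ i =>
      simp only [Nat.add_sub_cancel]
      rw [mul_smul_comm, ← pow_succ']
  rw [Finset.sum_congr rfl e1, Finset.sum_congr rfl e2]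
  rw [Finset.sum_range_succ' (fun j => ((j * stirling2 m j : ℕ) : ℤ) • (X:Polynomial ℤ) ^ j) m]
  have hz : ((0 * stirling2 m 0 : ℕ) : ℤ) • (X:Polynomial ℤ) ^ 0 = 0 := by simp
  rw [hz, add_zero]
  rw [Finset.sum_range_succ' (fun j => ((stirling2 (m+1) j : ℕ) : ℤ) • (X:Polynomial ℤ) ^ j) (m+1)]
  have hz2 : ((stirling2 (m+1) 0 : ℕ) : ℤ) • (X:Polynomial ℤ) ^ 0 = 0 := by
    show ((0:ℕ) : ℤ) • (X:Polynomial ℤ) ^ 0 = 0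
    simp
  rw [hz2, add_zero]
  rw [show (∑ k ∈ range m, (((k+1) * stirling2 m (k+1) : ℕ) : ℤ) • (X:Polynomial ℤ) ^ (k+1))
      = ∑ k ∈ range (m+1), (((k+1) * stirling2 m (k+1) : ℕ) : ℤ) • (X:Polynomial ℤ) ^ (k+1) from by
    rw [Finset.sum_range_succ, stirling2_eq_zero (show m < m+1 by omega)]
    simp]
  rw [← Finset.sum_add_distrib]
  refine Finset.sum_congr rfl fun k _ => ?_
  rw [show stirling2 (m+1) (k+1) = (k+1) * stirling2 m (k+1) + stirling2 m k from rfl]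
  push_cast
  rw [add_smul]
  ring

lemma stirling2_formula : ∀ (m k : ℕ),
    ∑ j ∈ range (k+1), (-1:ℤ)^(k-j) * (k.choose j) * (j:ℤ)^m
      = (k.factorial : ℤ) * stirling2 m k
  | 0, k => by
    have : ∑ j ∈ range (k+1), (-1:ℤ)^(k-j) * (k.choose j) * (j:ℤ)^0
        = ∑ j ∈ range (k+1), (-1:ℤ)^j * (k.choose j) := by
      rw [← Finset.sum_range_reflect]
      refine Finset.sum_congr rfl fun j hj => ?_
      rw [Finset.mem_range] at hj
      simp only [Nat.add_sub_cancel, pow_zero, mul_one]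
      rw [Nat.choose_symm (by omega : j ≤ k)]
      congr 2
      omega
    rw [this, Int.alternating_sum_range_choose]
    cases k with
    | zero => simp [stirling2]
    | succ K => simp [stirling2]
  | m+1, 0 => by simp [stirling2]
  | m+1, K+1 => by
    have IH1 := stirling2_formula m (K+1)
    have IH2 := stirling2_formula m K
    have IH2' : ∑ j ∈ range (K+2), (-1:ℤ)^(K-j) * (K.choose j) * (j:ℤ)^m
        = (K.factorial : ℤ) * stirling2 m K := by
      rw [Finset.sum_range_succ, Nat.choose_succ_self]
      push_cast
      rw [mul_zero, zero_mul, add_zero]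
      exact IH2
    have key : ∑ j ∈ range (K+2), (-1:ℤ)^(K+1-j) * ((K+1).choose j) * (j:ℤ)^(m+1)
        = (K+1) * (∑ j ∈ range (K+2), (-1:ℤ)^(K+1-j) * ((K+1).choose j) * (j:ℤ)^m)
          + (K+1) * (∑ j ∈ range (K+2), (-1:ℤ)^(K-j) * (K.choose j) * (j:ℤ)^m) := by
      rw [Finset.mul_sum, Finset.mul_sum, ← Finset.sum_add_distrib]
      refine Finset.sum_congr rfl fun j hj => ?_
      rw [Finset.mem_range] at hj
      rcases Nat.lt_or_ge j (K+1) with h | h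
      · have t1 := Nat.add_one_mul_choose_eq K j
        have t2 := Nat.choose_succ_right_eq (K+1) j
        have habs : (K+1) * K.choose j = (K+1).choose j * (K+1-j) := by
          try simp only [Nat.succ_eq_add_one] at t1
          rw [t1, t2]
        have habsZ : ((K:ℤ)+1) * (K.choose j : ℤ)
            = ((K+1).choose j : ℤ) * ((K:ℤ)+1-(j:ℤ)) := by
          have h1 : (((K+1) * K.choose j : ℕ) : ℤ)
              = (((K+1).choose j * (K+1-j) : ℕ) : ℤ) := by
            exact_mod_cast congrArg (fun n : ℕ => (n:ℤ)) habs
          have h2 : ((K+1-j:ℕ):ℤ) = (K:ℤ)+1-(j:ℤ) := by omega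
          push_cast at h1
          rw [h2] at h1
          linarith [h1]
        have hpow : K+1-j = (K-j)+1 := by omega
        rw [hpow, pow_succ]
        linear_combination (-(-1:ℤ)^(K-j) * (j:ℤ)^m) * habsZ
      · have hj' : j = K+1 := by omega
        subst hj'
        rw [Nat.choose_succ_self, Nat.choose_self]
        have h1 : K+1-(K+1) = 0 := by omega
        have h2 : K-(K+1) = 0 := by omega
        rw [h1, h2]
        push_cast
        ring
    rw [show K+1+1 = K+2 from rfl] at IH1 ⊢
    rw [key, IH1, IH2']
    rw [show stirling2 (m+1) (K+1) = (K+1) * stirling2 m (K+1) + stirling2 m K from rfl]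
    rw [show (K+1).factorial = (K+1) * K.factorial from rfl]
    push_cast
    ring

lemma stirling2_prime_mod {p : ℕ} (hp : p.Prime) {k : ℕ} (hk : k < p) :
    ((stirling2 p k : ℤ) : ZMod p) = ((stirling2 1 k : ℤ) : ZMod p) := by
  haveI : Fact p.Prime := ⟨hp⟩
  have cast1 := congrArg (fun z : ℤ => (z : ZMod p)) (stirling2_formula p k)
  have cast2 := congrArg (fun z : ℤ => (z : ZMod p)) (stirling2_formula 1 k)
  push_cast at cast1 cast2
  have hsum : (∑ j ∈ range (k+1), (-1:ZMod p)^(k-j) * (k.choose j) * (j:ZMod p)^p)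
      = ∑ j ∈ range (k+1), (-1:ZMod p)^(k-j) * (k.choose j) * (j:ZMod p)^1 := by
    refine Finset.sum_congr rfl fun j _ => ?_
    rw [pow_one, ZMod.pow_card]
  rw [hsum, cast2] at cast1
  have hfac : ((k.factorial : ℕ) : ZMod p) ≠ 0 := by
    rw [Ne, ZMod.natCast_eq_zero_iff]
    intro hdvd
    exact absurd (Nat.Prime.dvd_factorial hp |>.mp hdvd) (by omega)
  have := mul_left_cancel₀ hfac cast1
  push_cast
  exact this.symm

/-- `bellPoly` reduced mod `p`. -/
noncomputable def Bp (p m : ℕ) : Polynomial (ZMod p) :=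
  (bellPoly m).map (Int.castRingHom (ZMod p))

lemma Bp_eq {p : ℕ} (m : ℕ) :
    Bp p m = ∑ j ∈ range (m+1), ((stirling2 m j : ℤ) : ZMod p) • X ^ j := by
  rw [Bp, bellPoly, Polynomial.map_sum]
  refine Finset.sum_congr rfl fun j _ => ?_
  rw [smul_eq_C_mul, smul_eq_C_mul, Polynomial.map_mul, Polynomial.map_pow, map_X, map_C]
  rfl

lemma Bp_zero {p : ℕ} : Bp p 0 = 1 := by
  rw [Bp_eq]
  simp [stirling2]

lemma Bp_one {p : ℕ} : Bp p 1 = X := by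
  rw [Bp_eq]
  rw [Finset.sum_range_succ, Finset.sum_range_succ, Finset.sum_range_zero]
  have h0 : stirling2 1 0 = 0 := rfl
  have h1 : stirling2 1 1 = 1 := rfl
  rw [h0, h1]
  simp

lemma Bp_succ {p : ℕ} (m : ℕ) : Bp p (m+1) = X * (Bp p m + derivative (Bp p m)) := by
  rw [Bp, Bp, bellPoly_succ, Polynomial.map_mul, map_X, Polynomial.map_add,
    derivative_map]

lemma Bp_prime {p : ℕ} (hp : p.Prime) : Bp p p = X ^ p + X := by
  rw [Bp_eq, Finset.sum_range_succ, stirling2_self]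
  have hrest : (∑ j ∈ range p,
      ((stirling2 p j : ℤ) : ZMod p) • (X : Polynomial (ZMod p)) ^ j) = X := by
    have : ∀ j ∈ range p, ((stirling2 p j : ℤ) : ZMod p) • (X : Polynomial (ZMod p)) ^ j
        = ((stirling2 1 j : ℤ) : ZMod p) • X ^ j := fun j hj => by
      rw [stirling2_prime_mod hp (Finset.mem_range.mp hj)]
    rw [Finset.sum_congr rfl this]
    rw [Finset.sum_eq_single 1]
    · norm_num [show stirling2 1 1 = 1 from rfl]
    · intro j _ hj1
      match j, hj1 with
      | 0, _ => simp [show stirling2 1 0 = 0 from rfl]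
      | (i+2), _ => rw [stirling2_eq_zero (by omega)]; simp
    · intro h
      exact absurd (Finset.mem_range.mpr (by have := hp.two_le; omega)) h
  rw [hrest]
  push_cast
  rw [one_smul]
  ring

lemma Bp_touchard {p : ℕ} (hp : p.Prime) :
    ∀ n, Bp p (p + n) = X ^ p * Bp p n + Bp p (n+1) := by
  haveI : Fact p.Prime := ⟨hp⟩
  intro n
  induction n with
  | zero =>
    rw [Nat.add_zero, Bp_prime hp, Bp_zero, Bp_one]
    ring
  | succ n ih =>
    have hzero : (C (p : ZMod p) : Polynomial (ZMod p)) = 0 := by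
      rw [ZMod.natCast_self, map_zero]
    rw [show p + (n+1) = (p+n)+1 from rfl, Bp_succ (p+n), ih,
      derivative_add, derivative_mul, derivative_X_pow, hzero, zero_mul,
      Bp_succ (n+1), Bp_succ n]
    ring

theorem bellPoly_touchard (p : ℕ) (hp : p.Prime) (n : ℕ) :
    ∀ i, (p : ℤ) ∣ (bellPoly (p + n) - X ^ p * bellPoly n - bellPoly (n + 1)).coeff i := by
  haveI : Fact p.Prime := ⟨hp⟩
  intro i
  have hmap : ((bellPoly (p + n) - X ^ p * bellPoly n - bellPoly (n + 1)).map
      (Int.castRingHom (ZMod p))) = 0 := by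
    rw [Polynomial.map_sub, Polynomial.map_sub, Polynomial.map_mul, Polynomial.map_pow, map_X]
    have := Bp_touchard hp n
    rw [Bp, Bp, Bp] at this
    rw [this]
    ring
  have := congrArg (fun q => q.coeff i) hmap
  simp only [Polynomial.coeff_map, Polynomial.coeff_zero] at this
  rwa [← ZMod.intCast_zmod_eq_zero_iff_dvd]
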